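/- For every α > 0, the function g(b) = ∫_{−b}^{b} e^{−x²}·cos(√2·x·α) dx on b ∈ [0,∞) attains its global maximum at b₀ = π/(2√2·α); that is, g(b) ≤ g(b₀) for all b ≥ 0, with strict inequality whenever b ≠ b₀. -/

import Mathlib

open Real MeasureTheory intervalIntegral

-- key lemma: decreasing positive envelope times sin over [0,s] is positive
lemma key_sin_pos (c ω s : ℝ) (hc : 0 < c) (hω : 0 < ω) (hs : 0 < s) :
    0 < ∫ t in (0:ℝ)..s, Real.exp (-(c + t)^2) * Real.sin (ω * t) := by
  set u : ℝ → ℝ := fun t => Real.exp (-(c + t)^2) with hu_def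
  set u' : ℝ → ℝ := fun t => (-(2 * (c + t))) * Real.exp (-(c + t)^2) with hu'_def
  set v : ℝ → ℝ := fun t => (1 - Real.cos (ω * t)) / ω with hv_def
  set v' : ℝ → ℝ := fun t => Real.sin (ω * t) with hv'_def
  have hu : ∀ x ∈ Set.uIcc (0:ℝ) s, HasDerivAt u (u' x) x := by
    intro x _
    have h1 : HasDerivAt (fun t : ℝ => -(c + t)^2) (-(2 * (c + x))) x := by
      have : HasDerivAt (fun t : ℝ => (c + t)) 1 x := by
        simpa using (hasDerivAt_id x).const_add c
      simpa [mul_comm] using ((this.fun_pow 2).fun_neg)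
    simpa [hu_def, hu'_def, mul_comm, Function.comp_def] using (Real.hasDerivAt_exp (-(c + x)^2)).comp x h1
  have hv : ∀ x ∈ Set.uIcc (0:ℝ) s, HasDerivAt v (v' x) x := by
    intro x _
    have h1 : HasDerivAt (fun t : ℝ => ω * t) ω x := by
      simpa using (hasDerivAt_id x).const_mul ω
    have h2 : HasDerivAt (fun t : ℝ => Real.cos (ω * t)) (-Real.sin (ω * x) * ω) x :=
      (Real.hasDerivAt_cos (ω * x)).comp x h1
    have h3 : HasDerivAt (fun t : ℝ => 1 - Real.cos (ω * t)) (Real.sin (ω * x) * ω) x := by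
      simpa using h2.const_sub 1
    have := h3.div_const ω
    simpa [hv_def, hv'_def, mul_div_assoc, div_self hω.ne'] using this
  have hcu : Continuous u :=
    Real.continuous_exp.comp (((continuous_const.add continuous_id).pow 2).neg)
  have hcu' : Continuous u' :=
    ((continuous_const.mul (continuous_const.add continuous_id)).neg).mul hcu
  have hcv' : Continuous v' := Real.continuous_sin.comp (continuous_const.mul continuous_id)
  have hcv : Continuous v :=
    ((continuous_const.sub (Real.continuous_cos.comp (continuous_const.mul continuous_id)))).div_const ω
  have ibp := integral_mul_deriv_eq_deriv_mul hu hv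
    (hcu'.intervalIntegrable 0 s) (hcv'.intervalIntegrable 0 s)
  have hv0 : v 0 = 0 := by simp [hv_def]
  have hvnn : ∀ t, 0 ≤ v t := by
    intro t
    apply div_nonneg _ hω.le
    simp [Real.cos_le_one]
  have hw_nn : ∀ t ∈ Set.Icc (0:ℝ) s, 0 ≤ -(u' t * v t) := by
    intro t ht
    have h1 : 0 ≤ 2 * (c + t) := by nlinarith [ht.1]
    have h2 : (0:ℝ) < Real.exp (-(c + t)^2) := Real.exp_pos _
    have := hvnn t
    simp only [hu'_def]
    nlinarith [mul_nonneg (mul_nonneg h1 h2.le) this]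
  -- strict positivity of ∫ -(u' v) over [0,s]
  have hm : 0 < min s (π / ω) := lt_min hs (by positivity)
  have hms : min s (π / ω) ≤ s := min_le_left _ _
  have hint : ∀ a b : ℝ, IntervalIntegrable (fun t => -(u' t * v t)) volume a b :=
    fun a b => ((hcu'.mul hcv).neg).intervalIntegrable a b
  have hpos1 : 0 < ∫ t in (0:ℝ)..(min s (π / ω)), -(u' t * v t) := by
    apply intervalIntegral_pos_of_pos_on (hint 0 _) _ hm
    intro x hx
    have hx0 : 0 < x := hx.1
    have hxπ : ω * x < π := by
      have := hx.2.trans_le (min_le_right s (π / ω))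
      calc ω * x < ω * (π / ω) := by exact mul_lt_mul_of_pos_left (hx.2.trans_le (min_le_right s (π / ω))) hω
        _ = π := by field_simp
    have hcoslt : Real.cos (ω * x) < 1 := by
      have hne : Real.cos (ω * x) ≠ 1 := by
        intro h
        have := (Real.cos_eq_one_iff_of_lt_of_lt (by nlinarith [Real.pi_pos])
          (by nlinarith [Real.pi_pos])).1 h
        nlinarith [mul_pos hω hx0]
      exact lt_of_le_of_ne (Real.cos_le_one _) hne
    have hv_pos : 0 < v x := by
      apply div_pos _ hω
      linarith
    have hu'neg : u' x < 0 := by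
      have : (0:ℝ) < Real.exp (-(c + x)^2) := Real.exp_pos _
      simp only [hu'_def]
      nlinarith
    nlinarith
  have hnn2 : 0 ≤ ∫ t in (min s (π / ω))..s, -(u' t * v t) := by
    apply intervalIntegral.integral_nonneg hms
    intro t ht
    exact hw_nn t ⟨le_trans hm.le ht.1, ht.2⟩
  have hsum : (∫ t in (0:ℝ)..s, -(u' t * v t)) =
      (∫ t in (0:ℝ)..(min s (π / ω)), -(u' t * v t)) +
      ∫ t in (min s (π / ω))..s, -(u' t * v t) :=
    (integral_add_adjacent_intervals (hint _ _) (hint _ _)).symm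
  have hpos : 0 < ∫ t in (0:ℝ)..s, -(u' t * v t) := by
    rw [hsum]; linarith
  have hneg : (∫ t in (0:ℝ)..s, u' t * v t) < 0 := by
    rw [intervalIntegral.integral_neg] at hpos; linarith
  have husvs : 0 ≤ u s * v s := mul_nonneg (Real.exp_pos _).le (hvnn s)
  calc (0:ℝ) < u s * v s - u 0 * v 0 - ∫ t in (0:ℝ)..s, u' t * v t := by
        rw [hv0]; simp only [mul_zero]; linarith
    _ = ∫ t in (0:ℝ)..s, u t * v' t := ibp.symm
    _ = ∫ t in (0:ℝ)..s, Real.exp (-(c + t)^2) * Real.sin (ω * t) := rfl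

theorem optimal_binning (α : ℝ) (hα : 0 < α) :
    ∀ b ≥ (0 : ℝ),
      (∫ x in (-b)..b, Real.exp (-x ^ 2) * Real.cos (Real.sqrt 2 * x * α))
          ≤ (∫ x in (-(π / (2 * Real.sqrt 2 * α)))..(π / (2 * Real.sqrt 2 * α)),
              Real.exp (-x ^ 2) * Real.cos (Real.sqrt 2 * x * α)) ∧
      (b ≠ π / (2 * Real.sqrt 2 * α) →
        (∫ x in (-b)..b, Real.exp (-x ^ 2) * Real.cos (Real.sqrt 2 * x * α))
          < (∫ x in (-(π / (2 * Real.sqrt 2 * α)))..(π / (2 * Real.sqrt 2 * α)),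
              Real.exp (-x ^ 2) * Real.cos (Real.sqrt 2 * x * α))) := by
  intro b hb
  set f : ℝ → ℝ := fun x => Real.exp (-x ^ 2) * Real.cos (Real.sqrt 2 * x * α) with hf_def
  set ω : ℝ := Real.sqrt 2 * α with hω_def
  have hω : 0 < ω := mul_pos (Real.sqrt_pos.mpr (by norm_num)) hα
  have hb₀eq : π / (2 * Real.sqrt 2 * α) = π / (2 * ω) := by rw [hω_def, mul_assoc]
  set b₀ : ℝ := π / (2 * ω) with hb₀_def
  have hb₀ : 0 < b₀ := by positivity
  have hωb₀ : ω * b₀ = π / 2 := by rw [hb₀_def]; field_simp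
  have hfc : Continuous f := by
    apply Continuous.mul
    · exact Real.continuous_exp.comp ((continuous_pow 2).neg)
    · exact Real.continuous_cos.comp ((continuous_const.mul continuous_id).mul continuous_const)
  have hfi : ∀ a c : ℝ, IntervalIntegrable f volume a c := fun a c => hfc.intervalIntegrable a c
  have hfeven : ∀ x, f (-x) = f x := by
    intro x
    simp only [hf_def]
    rw [neg_pow, show Real.sqrt 2 * (-x) * α = -(Real.sqrt 2 * x * α) by ring, Real.cos_neg]
    norm_num
  -- difference identity
  have hdiff : (∫ x in (-b₀)..b₀, f x) - (∫ x in (-b)..b, f x) = 2 * ∫ x in b..b₀, f x := by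
    have h1 : (∫ x in (-b₀)..b₀, f x) =
        (∫ x in (-b₀)..(-b), f x) + ((∫ x in (-b)..b, f x) + ∫ x in b..b₀, f x) := by
      rw [integral_add_adjacent_intervals (hfi _ _) (hfi _ _),
        integral_add_adjacent_intervals (hfi _ _) (hfi _ _)]
    have h2 : (∫ x in (-b₀)..(-b), f x) = ∫ x in b..b₀, f x := by
      rw [← integral_comp_neg (f := f)]
      exact intervalIntegral.integral_congr (fun x _ => hfeven x)
    rw [h1, h2]; ring
  -- positivity of the gap when b ≠ b₀
  have hgap : b ≠ b₀ → 0 < ∫ x in b..b₀, f x := by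
    intro hne
    rcases lt_or_gt_of_ne hne with hlt | hgt
    · apply intervalIntegral_pos_of_pos_on (hfi b b₀) _ hlt
      intro x hx
      have hx0 : 0 < x := lt_of_le_of_lt hb hx.1
      have hcos : 0 < Real.cos (Real.sqrt 2 * x * α) := by
        rw [show Real.sqrt 2 * x * α = ω * x by rw [hω_def]; ring]
        apply Real.cos_pos_of_mem_Ioo
        constructor
        · have := Real.pi_pos; nlinarith [mul_pos hω hx0]
        · calc ω * x < ω * b₀ := mul_lt_mul_of_pos_left hx.2 hω
            _ = π / 2 := hωb₀
      exact mul_pos (Real.exp_pos _) hcos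
    · -- b > b₀
      set s : ℝ := b - b₀ with hs_def
      have hs : 0 < s := by simp [hs_def]; linarith
      have hshift : ∀ t : ℝ, f (t + b₀) = -(Real.exp (-(b₀ + t) ^ 2) * Real.sin (ω * t)) := by
        intro t
        have harg : Real.sqrt 2 * (t + b₀) * α = ω * t + π / 2 := by
          rw [show Real.sqrt 2 * (t + b₀) * α = ω * t + ω * b₀ by rw [hω_def]; ring, hωb₀]
        simp only [hf_def]
        rw [harg, Real.cos_add_pi_div_two, show (t + b₀) ^ 2 = (b₀ + t) ^ 2 by ring]
        ring
      have hsub : (∫ x in b₀..b, f x) = ∫ t in (0:ℝ)..s, f (t + b₀) := by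
        rw [integral_comp_add_right (f := f) b₀]
        norm_num [hs_def]
      have : (∫ x in b₀..b, f x) = -∫ t in (0:ℝ)..s, Real.exp (-(b₀ + t) ^ 2) * Real.sin (ω * t) := by
        rw [hsub, ← intervalIntegral.integral_neg]
        exact intervalIntegral.integral_congr (fun t _ => hshift t)
      rw [intervalIntegral.integral_symm, this, neg_neg]
      exact key_sin_pos b₀ ω s hb₀ hω hs
  rw [hb₀eq]
  by_cases hne : b = b₀
  · subst hne
    exact ⟨le_refl _, fun h => absurd rfl h⟩
  · have h := hgap hne
    have : (∫ x in (-b)..b, f x) < ∫ x in (-b₀)..b₀, f x := by linarith [hdiff]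
    exact ⟨this.le, fun _ => this⟩
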